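/- For every integer d ≥ 4, d · ∏_{l=0}^{d-2} (2^{d+2} - d - 6 - l) ≥ (d+1)! · ∏_{l=2}^{d} (2^{l+1} - 3). -/
import Mathlib

private lemma twopow8 (k : ℕ) : k + 8 ≤ 2 ^ (k + 3) := by
  induction k with
  | zero => norm_num
  | succ n ih =>
    have : 2 ^ (n + 1 + 3) = 2 * 2 ^ (n + 3) := by ring
    omega

private lemma twopow4 (d : ℕ) (hd : 4 ≤ d) : 2 * d + 4 ≤ 2 ^ d := by
  induction d, hd using Nat.le_induction with
  | base => norm_num
  | succ n hn ih =>
    have : 2 ^ (n + 1) = 2 * 2 ^ n := by ring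
    omega

private lemma arith_step (m : ℕ) :
    (m + 5) * (3 * 2 ^ (m + 5)) ^ (m + 4) * ((m + 7) * 2 ^ (m + 7)) ≤
      (m + 6) * (3 * 2 ^ (m + 6)) ^ (m + 5) := by
  have hA : (3 * 2 ^ (m + 6)) = 2 * (3 * 2 ^ (m + 5)) := by ring
  rw [hA, mul_pow 2 (3 * 2 ^ (m + 5)) (m + 5), pow_succ (3 * 2 ^ (m + 5)) (m + 4)]
  have key : (m + 5) * (m + 7) * 2 ^ (m + 7) ≤
      (m + 6) * 2 ^ (m + 5) * (3 * 2 ^ (m + 5)) := by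
    have h1 := twopow8 m
    have h2 : 2 ^ (m + 5) = 4 * 2 ^ (m + 3) := by ring
    have h3 : 2 ^ (m + 7) = 16 * 2 ^ (m + 3) := by ring
    have h4 : (m + 8) * 2 ^ (m + 3) ≤ 2 ^ (m + 3) * 2 ^ (m + 3) :=
      Nat.mul_le_mul_right _ h1
    rw [h2, h3]
    calc (m + 5) * (m + 7) * (16 * 2 ^ (m + 3))
        = ((m + 5) * (m + 7) * 16) * 2 ^ (m + 3) := by ring
      _ ≤ (48 * (m + 6) * (m + 8)) * 2 ^ (m + 3) :=
          Nat.mul_le_mul_right _ (by nlinarith)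
      _ = (48 * (m + 6)) * ((m + 8) * 2 ^ (m + 3)) := by ring
      _ ≤ (48 * (m + 6)) * (2 ^ (m + 3) * 2 ^ (m + 3)) := Nat.mul_le_mul_left _ h4
      _ = (m + 6) * (4 * 2 ^ (m + 3)) * (3 * (4 * 2 ^ (m + 3))) := by ring
  calc (m + 5) * (3 * 2 ^ (m + 5)) ^ (m + 4) * ((m + 7) * 2 ^ (m + 7))
      = ((m + 5) * (m + 7) * 2 ^ (m + 7)) * (3 * 2 ^ (m + 5)) ^ (m + 4) := by ring
    _ ≤ ((m + 6) * 2 ^ (m + 5) * (3 * 2 ^ (m + 5))) * (3 * 2 ^ (m + 5)) ^ (m + 4) :=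
        Nat.mul_le_mul_right _ key
    _ = (m + 6) * (2 ^ (m + 5) * ((3 * 2 ^ (m + 5)) ^ (m + 4) * (3 * 2 ^ (m + 5)))) := by
        ring

private lemma main_aux (d : ℕ) (hd : 5 ≤ d) :
    Nat.factorial (d + 1) * ∏ l ∈ Finset.Icc 2 d, 2 ^ (l + 1) ≤
      d * (3 * 2 ^ d) ^ (d - 1) := by
  induction d, hd using Nat.le_induction with
  | base => decide
  | succ n hn ih =>
    obtain ⟨m, rfl⟩ : ∃ m, n = m + 5 := ⟨n - 5, by omega⟩
    rw [Finset.prod_Icc_succ_top (by omega : 2 ≤ m + 5 + 1)]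
    have hfac : Nat.factorial (m + 5 + 1 + 1) = (m + 7) * Nat.factorial (m + 5 + 1) := rfl
    have key := arith_step m
    calc Nat.factorial (m + 5 + 1 + 1) *
          ((∏ l ∈ Finset.Icc 2 (m + 5), 2 ^ (l + 1)) * 2 ^ (m + 5 + 1 + 1))
        = (Nat.factorial (m + 5 + 1) * ∏ l ∈ Finset.Icc 2 (m + 5), 2 ^ (l + 1)) *
            ((m + 7) * 2 ^ (m + 7)) := by
          rw [hfac]; ring
      _ ≤ ((m + 5) * (3 * 2 ^ (m + 5)) ^ (m + 5 - 1)) * ((m + 7) * 2 ^ (m + 7)) :=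
          Nat.mul_le_mul_right _ ih
      _ = (m + 5) * (3 * 2 ^ (m + 5)) ^ (m + 4) * ((m + 7) * 2 ^ (m + 7)) := by norm_num
      _ ≤ (m + 6) * (3 * 2 ^ (m + 6)) ^ (m + 5) := key
      _ = (m + 5 + 1) * (3 * 2 ^ (m + 5 + 1)) ^ (m + 5 + 1 - 1) := by norm_num

/-- For every `d ≥ 4`,
`d · ∏_{l=0}^{d-2} (2^{d+2} - d - 6 - l) ≥ (d+1)! · ∏_{l=2}^{d} (2^{l+1} - 3)`. -/
theorem stmt_3 (d : ℕ) (hd : 4 ≤ d) :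
    Nat.factorial (d + 1) * ∏ l ∈ Finset.Icc 2 d, (2 ^ (l + 1) - 3) ≤
      d * ∏ l ∈ Finset.range (d - 1), (2 ^ (d + 2) - d - 6 - l) := by
  rcases eq_or_lt_of_le hd with h4 | h5
  · subst h4
    decide
  · have hd5 : 5 ≤ d := h5
    have hpow := twopow4 d hd
    have step1 : ∏ l ∈ Finset.Icc 2 d, (2 ^ (l + 1) - 3) ≤
        ∏ l ∈ Finset.Icc 2 d, 2 ^ (l + 1) :=
      Finset.prod_le_prod' (fun i _ => Nat.sub_le _ _)
    have hconst : (3 * 2 ^ d) ^ (d - 1) = ∏ _l ∈ Finset.range (d - 1), (3 * 2 ^ d) := by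
      rw [Finset.prod_const, Finset.card_range]
    have step3 : d * (3 * 2 ^ d) ^ (d - 1) ≤
        d * ∏ l ∈ Finset.range (d - 1), (2 ^ (d + 2) - d - 6 - l) := by
      apply Nat.mul_le_mul_left
      rw [hconst]
      apply Finset.prod_le_prod'
      intro i hi
      have hi' : i < d - 1 := Finset.mem_range.mp hi
      have he : 2 ^ (d + 2) = 4 * 2 ^ d := by ring
      omega
    calc Nat.factorial (d + 1) * ∏ l ∈ Finset.Icc 2 d, (2 ^ (l + 1) - 3)
        ≤ Nat.factorial (d + 1) * ∏ l ∈ Finset.Icc 2 d, 2 ^ (l + 1) :=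
          Nat.mul_le_mul_left _ step1
      _ ≤ d * (3 * 2 ^ d) ^ (d - 1) := main_aux d hd5
      _ ≤ _ := step3
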